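/- If ω_d : ℝ → ℝ is continuously differentiable and persistently exciting with parameters μ, T > 0 (i.e., ∫_t^{t+T} ω_d(s)² ds ≥ μ for all t ≥ 0), and |ω_d| ≤ ω̄, then the function Υ(t) := 1 + 2ω̄²T − (2/T)∫_t^{t+T}∫_t^m ω_d(s)² ds dm satisfies Υ'(t) ≤ −2μ/T + 2ω_d(t)² for all t ≥ 0. -/

import Mathlib

open MeasureTheory intervalIntegral

theorem upsilon_deriv_bound
    (ωd : ℝ → ℝ) (ωbar μ T : ℝ) (hT : 0 < T) (hμ : 0 < μ)
    (hC1 : ContDiff ℝ 1 ωd)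
    (hbnd : ∀ t : ℝ, |ωd t| ≤ ωbar)
    (hPE : ∀ t : ℝ, 0 ≤ t → μ ≤ ∫ s in t..(t + T), (ωd s) ^ 2)
    (Υ : ℝ → ℝ)
    (hΥ : ∀ t : ℝ, Υ t = 1 + 2 * ωbar ^ 2 * T -
      (2 / T) * ∫ m in t..(t + T), (∫ s in t..m, (ωd s) ^ 2)) :
    ∀ t : ℝ, 0 ≤ t → ∃ d : ℝ, HasDerivAt Υ d t ∧
      d ≤ -(2 * μ) / T + 2 * (ωd t) ^ 2 := by
  set f : ℝ → ℝ := fun s => (ωd s) ^ 2 with hf_def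
  have hf : Continuous f := (hC1.continuous.pow 2)
  set Φ : ℝ → ℝ := fun x => ∫ s in (0:ℝ)..x, f s with hΦ_def
  have hΦderiv : ∀ x : ℝ, HasDerivAt Φ (f x) x := fun x =>
    intervalIntegral.integral_hasDerivAt_right (hf.intervalIntegrable _ _)
      (hf.stronglyMeasurableAtFilter _ _) hf.continuousAt
  have hΦcont : Continuous Φ := by
    apply continuous_iff_continuousAt.2
    intro x
    exact (hΦderiv x).continuousAt
  set H : ℝ → ℝ := fun x => ∫ u in (0:ℝ)..x, Φ u with hH_def
  have hHderiv : ∀ x : ℝ, HasDerivAt H (Φ x) x := fun x =>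
    intervalIntegral.integral_hasDerivAt_right (hΦcont.intervalIntegrable _ _)
      (hΦcont.stronglyMeasurableAtFilter _ _) hΦcont.continuousAt
  -- inner integral rewrite
  have hinner : ∀ t m : ℝ, (∫ s in t..m, f s) = Φ m - Φ t := by
    intro t m
    have ha : IntervalIntegrable f volume 0 t := hf.intervalIntegrable 0 t
    have hb : IntervalIntegrable f volume t m := hf.intervalIntegrable t m
    have := intervalIntegral.integral_add_adjacent_intervals ha hb
    simp only [hΦ_def]
    linarith [this]
  have hΥ' : ∀ t : ℝ, Υ t = 1 + 2 * ωbar ^ 2 * T -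
      (2 / T) * (H (t + T) - H t - T * Φ t) := by
    intro t
    rw [hΥ t]
    congr 1
    congr 1
    have h1 : (∫ m in t..(t + T), (∫ s in t..m, f s)) =
        ∫ m in t..(t + T), (Φ m - Φ t) := by
      apply intervalIntegral.integral_congr
      intro m _
      exact hinner t m
    rw [h1, intervalIntegral.integral_sub (hΦcont.intervalIntegrable _ _)
      (intervalIntegrable_const)]
    rw [intervalIntegral.integral_const]
    simp only [hH_def]
    have ha : IntervalIntegrable Φ volume 0 t := hΦcont.intervalIntegrable 0 t
    have hb : IntervalIntegrable Φ volume t (t + T) := hΦcont.intervalIntegrable t (t + T)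
    have := intervalIntegral.integral_add_adjacent_intervals ha hb
    have h2 : (∫ u in t..(t+T), Φ u) = (∫ u in (0:ℝ)..(t+T), Φ u) - ∫ u in (0:ℝ)..t, Φ u := by
      linarith [this]
    rw [h2]
    simp

  intro t ht
  refine ⟨-(2 / T) * (Φ (t + T) - Φ t - T * f t), ?_, ?_⟩
  · have hg : HasDerivAt (fun t => 1 + 2 * ωbar ^ 2 * T -
        (2 / T) * (H (t + T) - H t - T * Φ t))
        (-(2 / T) * (Φ (t + T) - Φ t - T * f t)) t := by
      have hshift : HasDerivAt (fun t => H (t + T)) (Φ (t + T)) t := by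
        have := (hHderiv (t + T)).comp t ((hasDerivAt_id t).add_const T)
        simpa [Function.comp_def] using this
      have := ((hasDerivAt_const t (1 + 2 * ωbar ^ 2 * T)).sub
        (((hshift.sub (hHderiv t)).sub ((hΦderiv t).const_mul T)).const_mul (2 / T)))
      rw [show -(2 / T) * (Φ (t + T) - Φ t - T * f t) =
        0 - 2 / T * (Φ (t + T) - Φ t - T * f t) by ring]
      exact this
    have : Υ = fun t => 1 + 2 * ωbar ^ 2 * T -
        (2 / T) * (H (t + T) - H t - T * Φ t) := funext hΥ'
    rw [this]
    exact hg
  · have hI : μ ≤ Φ (t + T) - Φ t := by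
      rw [← hinner t (t + T)]
      exact hPE t ht
    have h2T : 0 < 2 / T := by positivity
    have : -(2 / T) * (Φ (t + T) - Φ t) ≤ -(2 / T) * μ := by nlinarith
    have hTne : T ≠ 0 := ne_of_gt hT
    have : -(2 / T) * (Φ (t + T) - Φ t - T * f t)
        = -(2 / T) * (Φ (t + T) - Φ t) + 2 * f t := by
      field_simp
      ring
    rw [this]
    have : -(2 * μ) / T = -(2 / T) * μ := by ring
    rw [this]
    have hft : f t = ωd t ^ 2 := rfl
    nlinarith
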